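/- Let q ≥ 3 be an odd integer and let Pₙ be the polynomials defined by P₀(x) = 1, P₁(x) = x, P_{n+1}(x) = ((q+1)/q)·x·Pₙ(x) − (1/q)·P_{n−1}(x). Then for every n ∈ ℕ, the derivative of Pₙ at 1 equals P'ₙ(1) = n·(q+1)/(q−1) − 2q(1 − q^{−n})/(q−1)². -/

import Mathlib

noncomputable section

/-- The spherical polynomials `Pₙ` for the parameter `q`:
`P₀ = 1`, `P₁ = X`, `P_{n+2}(x) = ((q+1)/q)·x·P_{n+1}(x) − (1/q)·Pₙ(x)`. -/
def P (q : ℝ) : ℕ → ℝ → ℝ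
  | 0 => fun _ => 1
  | 1 => fun s => s
  | (n + 2) => fun s => ((q + 1) / q) * s * P q (n + 1) s - (1 / q) * P q n s

lemma P_key (q : ℝ) (hq1 : 1 < q) (n : ℕ) :
    P q n 1 = 1 ∧ HasDerivAt (P q n)
      ((n : ℝ) * (q + 1) / (q - 1) - 2 * q * (1 - ((q : ℝ) ^ n)⁻¹) / (q - 1) ^ 2) 1 := by
  have hq0 : q ≠ 0 := by linarith
  have hq1' : q - 1 ≠ 0 := by intro h; apply hq0; nlinarith
  induction n using Nat.twoStepInduction with
  | zero =>
    constructor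
    · rfl
    · have h0 : HasDerivAt (P q 0) 0 1 := hasDerivAt_const (1 : ℝ) (1 : ℝ)
      simpa using h0
  | one =>
    constructor
    · rfl
    · have : ((1:ℕ) : ℝ) * (q + 1) / (q - 1) - 2 * q * (1 - ((q : ℝ) ^ 1)⁻¹) / (q - 1) ^ 2
          = 1 := by field_simp; ring
      rw [this]
      exact hasDerivAt_id 1
  | more n ih0 ih1 =>
    obtain ⟨hv0, hd0⟩ := ih0
    obtain ⟨hv1, hd1⟩ := ih1
    have hqn : (q : ℝ) ^ n ≠ 0 := pow_ne_zero _ hq0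
    have hval : P q (n + 2) 1 = 1 := by
      show ((q + 1) / q) * 1 * P q (n + 1) 1 - (1 / q) * P q n 1 = 1
      rw [hv0, hv1]; field_simp; ring
    refine ⟨hval, ?_⟩
    have h := (((hasDerivAt_id (1:ℝ)).const_mul ((q + 1) / q)).mul hd1).sub (hd0.const_mul (1 / q))
    have heq : (P q (n + 2)) = fun s => ((q + 1) / q) * s * P q (n + 1) s - (1 / q) * P q n s := rfl
    rw [heq]
    refine h.congr_deriv ?_
    rw [hv1, id_eq]
    push_cast
    field_simp
    ring
  
theorem deriv_P_at_one (q : ℕ) (hq3 : 3 ≤ q) (hqodd : Odd q) (n : ℕ) :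
    deriv (P (q : ℝ) n) 1 =
      (n : ℝ) * ((q : ℝ) + 1) / ((q : ℝ) - 1) -
        2 * (q : ℝ) * (1 - (q : ℝ) ^ (-(n : ℤ))) / ((q : ℝ) - 1) ^ 2 := by
  have hq1 : (1 : ℝ) < q := by exact_mod_cast Nat.lt_of_lt_of_le (by norm_num) hq3
  have := (P_key (q : ℝ) hq1 n).2.deriv
  rw [this, zpow_neg, zpow_natCast]
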